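/- Let n > k > 0 be coprime integers with n − k odd, and set k₀ = (n−k−1)/2. Define a sequence (c_i)_{i=1}^{n} of integers by c_n = 0 together with the recursion (indices taken as least positive residues mod n): c_{i+k} = c_i + 1 for 1 ≤ i ≤ k₀; c_{i+k} = c_i − 1 for k₀+1 ≤ i ≤ 2k₀; and c_{ī+k} = c_i for 2k₀+1 ≤ i ≤ n. Then this recursion, together with c_n = 0, determines the sequence uniquely, and moreover c_{n−k} = c_k = 0. -/
import Mathlib


/-!
STATEMENT 14 (well-definedness of the sequence (c_i) of Definition `d:cp`):
For coprime n > K > 0 with n − K odd and k₀ = (n−K−1)/2, the recursion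
(with indices reduced to least positive residues mod n)
  c_{i+K} = c_i + 1  (1 ≤ i ≤ k₀),
  c_{i+K} = c_i − 1  (k₀+1 ≤ i ≤ 2k₀),
  c_{ī+K} = c_i      (2k₀+1 ≤ i ≤ n),
together with c_n = 0, admits a solution, determines the values c_1, …, c_n uniquely,
and every solution satisfies c_{n−K} = c_K = 0.
-/

/-- least positive residue of `a` modulo `n` (valued in {1, …, n} for n ≥ 1). -/
def lpr (a n : ℕ) : ℕ := (a + n - 1) % n + 1

/-- the three-case recursion of Definition `d:cp` for the pair (n, K), with
`k₀ = (n − K − 1)/2`, together with the initial condition `c n = 0`. -/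
def IsCSeq (n K : ℕ) (c : ℕ → ℤ) : Prop :=
  c n = 0 ∧
  (∀ i : ℕ, 1 ≤ i → i ≤ (n - K - 1) / 2 → c (i + K) = c i + 1) ∧
  (∀ i : ℕ, (n - K - 1) / 2 + 1 ≤ i → i ≤ 2 * ((n - K - 1) / 2) → c (i + K) = c i - 1) ∧
  (∀ i : ℕ, 2 * ((n - K - 1) / 2) + 1 ≤ i → i ≤ n → c (lpr (i + K) n) = c i)


lemma lpr_pos (a n : ℕ) : 1 ≤ lpr a n := Nat.le_add_left 1 _

lemma lpr_le (a n : ℕ) (hn : 1 ≤ n) : lpr a n ≤ n := by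
  have := Nat.mod_lt (a + n - 1) hn
  unfold lpr; omega

lemma lpr_eq_self (a n : ℕ) (h1 : 1 ≤ a) (h2 : a ≤ n) : lpr a n = a := by
  unfold lpr
  rw [show a + n - 1 = (a - 1) + n by omega, Nat.add_mod_right,
    Nat.mod_eq_of_lt (by omega)]
  omega

lemma lpr_mod (a n : ℕ) (hn : 1 ≤ n) : lpr a n = lpr (a % n) n := by
  unfold lpr
  congr 1
  conv_lhs => rw [show a + n - 1 = a % n + n - 1 + n * (a / n) by
    have := Nat.mod_add_div a n; have := Nat.mod_lt a hn; omega]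
  rw [Nat.add_mul_mod_self_left]

lemma lpr_congr {a b n : ℕ} (hn : 1 ≤ n) (h : a ≡ b [MOD n]) : lpr a n = lpr b n := by
  rw [lpr_mod a n hn, lpr_mod b n hn, show a % n = b % n from h]

lemma lpr_cast {n : ℕ} (hn : 1 ≤ n) (a : ℕ) : ((lpr a n : ℕ) : ZMod n) = (a : ZMod n) := by
  unfold lpr
  push_cast [ZMod.natCast_mod]
  rw [show ((a + n - 1 : ℕ) : ZMod n) + 1 = ((a + n - 1 + 1 : ℕ) : ZMod n) by push_cast; ring,
    show a + n - 1 + 1 = a + n by omega]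
  push_cast
  simp


/-- value of the step taken at index i -/
def stepf (n K i : ℕ) : ℤ :=
  (if i ∈ Finset.Icc 1 ((n - K - 1) / 2) then 1 else 0)
    - (if i ∈ Finset.Icc ((n - K - 1) / 2 + 1) (2 * ((n - K - 1) / 2)) then 1 else 0)

/-- discrete log: the unique j ∈ [0, n) with j*K ≡ i (mod n) -/
def dlg (n K i : ℕ) : ℕ := ((i : ZMod n) * (K : ZMod n)⁻¹).val

def Fsum (n K j : ℕ) : ℤ := ∑ t ∈ Finset.range j, stepf n K (lpr (t * K) n)

def cseq (n K i : ℕ) : ℤ := Fsum n K (dlg n K i)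

section
variable {n K : ℕ}

lemma dlg_lt (hn : 2 ≤ n) (i : ℕ) : dlg n K i < n := by
  have : NeZero n := ⟨by omega⟩
  exact ZMod.val_lt _

lemma dlg_mul_K (hn : 2 ≤ n) (hcop : Nat.Coprime n K) (i : ℕ) : ((dlg n K i * K : ℕ) : ZMod n) = (i : ZMod n) := by
  have : NeZero n := ⟨by omega⟩
  have hu : IsUnit (K : ZMod n) :=
    (ZMod.isUnit_iff_coprime K n).2 hcop.symm
  push_cast [dlg, ZMod.natCast_val, ZMod.cast_id]
  rw [mul_assoc, ZMod.inv_mul_of_unit _ hu, mul_one]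

lemma dlg_of_mul (hn : 2 ≤ n) (hcop : Nat.Coprime n K) (t : ℕ) (ht : t < n) : dlg n K (t * K) = t := by
  have : NeZero n := ⟨by omega⟩
  have hu : IsUnit (K : ZMod n) := (ZMod.isUnit_iff_coprime K n).2 hcop.symm
  unfold dlg
  push_cast
  rw [mul_assoc, ZMod.mul_inv_of_unit _ hu, mul_one, ZMod.val_natCast_of_lt ht]

end

lemma lpr_dlg {n K : ℕ} (hn : 2 ≤ n) (hcop : Nat.Coprime n K) (i : ℕ)
    (h1 : 1 ≤ i) (h2 : i ≤ n) : lpr (dlg n K i * K) n = i := by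
  have : NeZero n := ⟨by omega⟩
  have hmod : dlg n K i * K ≡ i [MOD n] :=
    (ZMod.natCast_eq_natCast_iff _ _ _).1 (dlg_mul_K hn hcop i)
  rw [lpr_congr (by omega) hmod, lpr_eq_self i n h1 h2]

lemma dlg_self {n K : ℕ} (hn : 2 ≤ n) : dlg n K n = 0 := by
  have : NeZero n := ⟨by omega⟩
  unfold dlg
  rw [ZMod.natCast_self, zero_mul, ZMod.val_zero]

lemma Fsum_total {n K : ℕ} (hK : 0 < K) (hKn : K < n) (hcop : Nat.Coprime n K)
    (hodd : Odd (n - K)) : Fsum n K n = 0 := by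
  have hn : 2 ≤ n := by omega
  have h2k : 2 * ((n - K - 1) / 2) = n - K - 1 := by
    obtain ⟨m, hm⟩ := hodd; omega
  have hbij : Fsum n K n = ∑ i ∈ Finset.Icc 1 n, stepf n K i := by
    unfold Fsum
    refine Finset.sum_nbij' (fun t => lpr (t * K) n) (fun i => dlg n K i)
      ?_ ?_ ?_ ?_ (fun a _ => rfl)
    · intro t _
      exact Finset.mem_Icc.2 ⟨lpr_pos _ _, lpr_le _ _ (by omega)⟩
    · intro i _
      exact Finset.mem_range.2 (dlg_lt hn i)
    · intro t ht
      have hmod : lpr (t * K) n ≡ t * K [MOD n] :=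
        (ZMod.natCast_eq_natCast_iff _ _ _).1 (lpr_cast (by omega) (t * K))
      have : dlg n K (lpr (t * K) n) = dlg n K (t * K) := by
        unfold dlg
        rw [(ZMod.natCast_eq_natCast_iff _ _ _).2 hmod]
      show dlg n K (lpr (t * K) n) = t
      rw [this, dlg_of_mul hn hcop t (Finset.mem_range.1 ht)]
    · intro i hi
      obtain ⟨h1, h2⟩ := Finset.mem_Icc.1 hi
      exact lpr_dlg hn hcop i h1 h2
  rw [hbij]
  unfold stepf
  rw [Finset.sum_sub_distrib]
  have e1 : ∀ (a b : ℕ), a ≤ n → b ≤ n →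
      (∑ i ∈ Finset.Icc 1 n, (if i ∈ Finset.Icc a b then (1 : ℤ) else 0))
        = (Finset.Icc a b ∩ Finset.Icc 1 n).card := by
    intro a b ha hb
    rw [Finset.sum_ite_mem, Finset.sum_const, Finset.inter_comm]
    simp [mul_comm]
  set k0 := (n - K - 1) / 2 with hk0
  have hs1 : Finset.Icc 1 k0 ∩ Finset.Icc 1 n = Finset.Icc 1 k0 :=
    Finset.inter_eq_left.2 (Finset.Icc_subset_Icc le_rfl (by omega))
  have hs2 : Finset.Icc (k0 + 1) (2 * k0) ∩ Finset.Icc 1 n = Finset.Icc (k0 + 1) (2 * k0) :=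
    Finset.inter_eq_left.2 (Finset.Icc_subset_Icc (by omega) (by omega))
  rw [e1 1 k0 (by omega) (by omega), e1 (k0 + 1) (2 * k0) (by omega) (by omega), hs1, hs2,
    Nat.card_Icc, Nat.card_Icc]
  have : k0 + 1 - 1 = 2 * k0 + 1 - (k0 + 1) := by omega
  rw [this, sub_self]

lemma cseq_congr {n K : ℕ} {i j : ℕ} (h : (i : ZMod n) = (j : ZMod n)) :
    cseq n K i = cseq n K j := by
  unfold cseq dlg; rw [h]

lemma cseq_n {n K : ℕ} (hn : 2 ≤ n) : cseq n K n = 0 := by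
  unfold cseq
  rw [dlg_self hn]
  rfl

lemma cseq_step {n K : ℕ} (hK : 0 < K) (hKn : K < n) (hcop : Nat.Coprime n K)
    (hodd : Odd (n - K)) (i : ℕ) (h1 : 1 ≤ i) (h2 : i ≤ n) :
    cseq n K (lpr (i + K) n) = cseq n K i + stepf n K i := by
  have hn : 2 ≤ n := by omega
  have : NeZero n := ⟨by omega⟩
  have hu : IsUnit (K : ZMod n) := (ZMod.isUnit_iff_coprime K n).2 hcop.symm
  haveI : Fact (1 < n) := ⟨by omega⟩
  have hd : dlg n K (lpr (i + K) n) = dlg n K (i + K) := by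
    unfold dlg; rw [lpr_cast (by omega) (i + K)]
  have hstep : dlg n K (i + K) = (dlg n K i + 1) % n := by
    unfold dlg
    have he : ((i + K : ℕ) : ZMod n) * (K : ZMod n)⁻¹
        = (i : ZMod n) * (K : ZMod n)⁻¹ + 1 := by
      push_cast
      rw [add_mul, ZMod.mul_inv_of_unit _ hu]
    rw [he, ZMod.val_add, ZMod.val_one _]
  have hlpr : lpr (dlg n K i * K) n = i := lpr_dlg hn hcop i h1 h2
  set j := dlg n K i with hjdef
  have hj : j < n := dlg_lt hn i
  have hsucc : Fsum n K (j + 1) = cseq n K i + stepf n K i := by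
    rw [Fsum, Finset.sum_range_succ, hlpr]
    rfl
  by_cases hcase : j + 1 < n
  · show Fsum n K (dlg n K (lpr (i + K) n)) = _
    rw [hd, hstep, Nat.mod_eq_of_lt hcase, hsucc]
  · have hj1 : j + 1 = n := by omega
    show Fsum n K (dlg n K (lpr (i + K) n)) = _
    rw [hd, hstep, hj1, Nat.mod_self]
    have h0 : Fsum n K (j + 1) = 0 := by rw [hj1]; exact Fsum_total hK hKn hcop hodd
    show (0 : ℤ) = _
    rw [← hsucc]
    exact h0.symm

lemma stepf_one {n K i : ℕ} (h1 : 1 ≤ i) (h2 : i ≤ (n - K - 1) / 2) :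
    stepf n K i = 1 := by
  unfold stepf
  rw [if_pos (Finset.mem_Icc.2 ⟨h1, h2⟩), if_neg (by rw [Finset.mem_Icc]; omega)]
  norm_num

lemma stepf_neg_one {n K i : ℕ} (h1 : (n - K - 1) / 2 + 1 ≤ i)
    (h2 : i ≤ 2 * ((n - K - 1) / 2)) : stepf n K i = -1 := by
  unfold stepf
  rw [if_neg (by rw [Finset.mem_Icc]; omega), if_pos (Finset.mem_Icc.2 ⟨h1, h2⟩)]
  norm_num

lemma stepf_zero {n K i : ℕ} (h1 : 2 * ((n - K - 1) / 2) + 1 ≤ i) :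
    stepf n K i = 0 := by
  unfold stepf
  rw [if_neg (by rw [Finset.mem_Icc]; omega), if_neg (by rw [Finset.mem_Icc]; omega)]
  norm_num

lemma lpr_zero (n : ℕ) (hn : 1 ≤ n) : lpr 0 n = n := by
  unfold lpr
  rw [show 0 + n - 1 = n - 1 by omega, Nat.mod_eq_of_lt (by omega)]
  omega

/-- every solution of the recursion takes the uniform step form -/
lemma IsCSeq.step {n K : ℕ} (hK : 0 < K) (hKn : K < n) (hcop : Nat.Coprime n K)
    (hodd : Odd (n - K)) {c : ℕ → ℤ} (hc : IsCSeq n K c) (i : ℕ)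
    (h1 : 1 ≤ i) (h2 : i ≤ n) : c (lpr (i + K) n) = c i + stepf n K i := by
  obtain ⟨h0, r1, r2, r3⟩ := hc
  have h2k : 2 * ((n - K - 1) / 2) = n - K - 1 := by
    obtain ⟨m, hm⟩ := hodd; omega
  by_cases hA : i ≤ (n - K - 1) / 2
  · rw [lpr_eq_self (i + K) n (by omega) (by omega), r1 i h1 hA, stepf_one h1 hA]
  · by_cases hB : i ≤ 2 * ((n - K - 1) / 2)
    · rw [lpr_eq_self (i + K) n (by omega) (by omega), r2 i (by omega) hB,
        stepf_neg_one (by omega) hB]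
      ring
    · rw [r3 i (by omega) h2, stepf_zero (by omega), add_zero]

theorem statement14
    (n K : ℕ) (hK : 0 < K) (hKn : K < n) (hcop : Nat.Coprime n K)
    (hodd : Odd (n - K)) :
    -- existence:
    (∃ c : ℕ → ℤ, IsCSeq n K c) ∧
    -- uniqueness of the values c_1, …, c_n :
    (∀ c c' : ℕ → ℤ, IsCSeq n K c → IsCSeq n K c' →
      ∀ i : ℕ, 1 ≤ i → i ≤ n → c i = c' i) ∧
    -- moreover c_{n−K} = c_K = 0 :
    (∀ c : ℕ → ℤ, IsCSeq n K c → c (n - K) = 0 ∧ c K = 0) := by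
  have hn : 2 ≤ n := by omega
  have h2k : 2 * ((n - K - 1) / 2) = n - K - 1 := by
    obtain ⟨m, hm⟩ := hodd; omega
  refine ⟨⟨cseq n K, ?_, ?_, ?_, ?_⟩, ?_, ?_⟩
  · exact cseq_n hn
  · intro i hi1 hi2
    have hlpr : lpr (i + K) n = i + K := lpr_eq_self _ n (by omega) (by omega)
    have := cseq_step hK hKn hcop hodd i hi1 (by omega)
    rw [hlpr, stepf_one hi1 hi2] at this
    exact this
  · intro i hi1 hi2
    have hlpr : lpr (i + K) n = i + K := lpr_eq_self _ n (by omega) (by omega)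
    have := cseq_step hK hKn hcop hodd i (by omega) (by omega)
    rw [hlpr, stepf_neg_one hi1 hi2] at this
    exact this
  · intro i hi1 hi2
    have := cseq_step hK hKn hcop hodd i (by omega) hi2
    rw [stepf_zero hi1, add_zero] at this
    exact this
  · -- uniqueness
    intro c c' hc hc' i hi1 hi2
    have key : ∀ j : ℕ, c (lpr (j * K) n) = c' (lpr (j * K) n) := by
      intro j
      induction j with
      | zero =>
        rw [zero_mul, lpr_zero n (by omega), hc.1, hc'.1]
      | succ j ih =>
        set x := lpr (j * K) n with hx
        have hx1 : 1 ≤ x := lpr_pos _ _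
        have hx2 : x ≤ n := lpr_le _ _ (by omega)
        have hmod : x + K ≡ (j + 1) * K [MOD n] := by
          have : x ≡ j * K [MOD n] :=
            (ZMod.natCast_eq_natCast_iff _ _ _).1 (lpr_cast (by omega) (j * K))
          calc x + K ≡ j * K + K [MOD n] := Nat.ModEq.add_right K this
            _ = (j + 1) * K := by ring
        have heq : lpr ((j + 1) * K) n = lpr (x + K) n :=
          (lpr_congr (by omega) hmod).symm
        rw [heq, hc.step hK hKn hcop hodd x hx1 hx2,
          hc'.step hK hKn hcop hodd x hx1 hx2, ih]
    have := key (dlg n K i)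
    rwa [lpr_dlg hn hcop i hi1 hi2] at this
  · -- values at n - K and K
    intro c hc
    obtain ⟨h0, _, _, r3⟩ := hc
    constructor
    · have := r3 (n - K) (by omega) (by omega)
      rw [show n - K + K = n by omega, lpr_eq_self n n (by omega) le_rfl, h0] at this
      exact this.symm
    · have := r3 n (by omega) le_rfl
      have hl : lpr (n + K) n = K := by
        rw [lpr_congr (n := n) (by omega) (show n + K ≡ K [MOD n] by
          simpa using (Nat.ModEq.refl K).add_left n), lpr_eq_self K n hK hKn.le]
      rw [hl, h0] at this
      exact this
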